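/- If z_t satisfies the Hamiltonian descent ODE ż_t = J∇H(z_t) + z⋆ − z_t, then d/dt H(z_t) ≤ −H(z_t), and consequently 0 ≤ H(z_t) ≤ H(z_0)·exp(−t) for all t ≥ 0; i.e., the Hamiltonian converges to zero linearly. -/

import Mathlib

open RealInnerProductSpace

/-- The standard symplectic matrix `J` on `ℝ^{2n}`: `J (x, p) = (p, -x)`. -/
def Jmap (n : ℕ) (v : EuclideanSpace ℝ (Fin n ⊕ Fin n)) :
    EuclideanSpace ℝ (Fin n ⊕ Fin n) :=
  WithLp.toLp 2 (fun i => Sum.elim (fun a => v (Sum.inr a)) (fun a => -(v (Sum.inl a))) i)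

lemma inner_Jmap (n : ℕ) (v : EuclideanSpace ℝ (Fin n ⊕ Fin n)) :
    ⟪v, Jmap n v⟫ = 0 := by
  simp only [PiLp.inner_apply, RCLike.inner_apply, starRingEnd_apply, star_trivial]
  rw [Fintype.sum_sum_type]
  simp [Jmap, mul_comm]

/-- Gradient inequality for convex functions. -/
lemma grad_ineq {E : Type*} [NormedAddCommGroup E] [InnerProductSpace ℝ E] [CompleteSpace E]
    {H : E → ℝ} (hconv : ConvexOn ℝ Set.univ H) {x g : E}
    (hg : HasGradientAt H g x) (w : E) :
    ⟪g, w - x⟫ ≤ H w - H x := by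
  set φ : ℝ → ℝ := fun t => H (AffineMap.lineMap x w t) with hφ
  have hφc : ConvexOn ℝ Set.univ φ := by
    have := hconv.comp_affineMap (AffineMap.lineMap x w)
    simp only [Set.preimage_univ] at this
    exact this
  have hline : ∀ t : ℝ, HasDerivAt (fun s : ℝ => AffineMap.lineMap x w s) (w - x) t := by
    intro t
    have : (fun s : ℝ => AffineMap.lineMap x w s) = fun s : ℝ => s • (w - x) + x := by
      funext s; simp [AffineMap.lineMap_apply]
    rw [this]
    simpa using ((hasDerivAt_id t).smul_const (w - x)).add_const x
  have hφd : HasDerivAt φ ⟪g, w - x⟫ 0 := by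
    have hx0 : (AffineMap.lineMap x w : ℝ →ᵃ[ℝ] E) 0 = x := by
      simp [AffineMap.lineMap_apply]
    have hF : HasFDerivAt H (InnerProductSpace.toDual ℝ E g)
        ((AffineMap.lineMap x w : ℝ →ᵃ[ℝ] E) 0) := by
      rw [hx0]; exact hg.hasFDerivAt
    have := hF.comp_hasDerivAt 0 (hline 0)
    simp only [InnerProductSpace.toDual_apply_apply] at this
    exact this
  have h01 : (0:ℝ) < 1 := one_pos
  have := hφc.deriv_le_slope (Set.mem_univ 0) (Set.mem_univ 1) h01 hφd.differentiableAt
  rw [hφd.deriv] at this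
  have hs : slope φ 0 1 = H w - H x := by
    simp [slope_def_field, φ, AffineMap.lineMap_apply]
  linarith [this, hs ▸ this]

theorem stmt2 (n : ℕ)
    (H : EuclideanSpace ℝ (Fin n ⊕ Fin n) → ℝ)
    (hconv : ConvexOn ℝ Set.univ H)
    (hH : ∀ w, HasGradientAt H (gradient H w) w)
    (zstar : EuclideanSpace ℝ (Fin n ⊕ Fin n))
    (hmin : H zstar = 0) (hnonneg : ∀ w, 0 ≤ H w)
    (z : ℝ → EuclideanSpace ℝ (Fin n ⊕ Fin n))
    (hz : ∀ t, HasDerivAt z (Jmap n (gradient H (z t)) + zstar - z t) t) :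
    (∀ t, deriv (fun s => H (z s)) t ≤ -H (z t)) ∧
      ∀ t, 0 ≤ t → 0 ≤ H (z t) ∧ H (z t) ≤ H (z 0) * Real.exp (-t) := by
  set f : ℝ → ℝ := fun s => H (z s) with hf
  have hfd : ∀ t, HasDerivAt f ⟪gradient H (z t), Jmap n (gradient H (z t)) + zstar - z t⟫ t := by
    intro t
    have := ((hH (z t)).hasFDerivAt).comp_hasDerivAt t (hz t)
    simp only [InnerProductSpace.toDual_apply_apply] at this
    exact this
  have key : ∀ t, ⟪gradient H (z t), Jmap n (gradient H (z t)) + zstar - z t⟫ ≤ -f t := by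
    intro t
    have h1 : ⟪gradient H (z t), Jmap n (gradient H (z t)) + zstar - z t⟫
        = ⟪gradient H (z t), Jmap n (gradient H (z t))⟫
          + ⟪gradient H (z t), zstar - z t⟫ := by
      rw [add_sub_assoc, inner_add_right]
    rw [h1, inner_Jmap, zero_add]
    have := grad_ineq hconv (hH (z t)) zstar
    simp only [hmin] at this
    linarith
  have hderiv : ∀ t, deriv f t ≤ -f t := fun t => (hfd t).deriv ▸ key t
  refine ⟨hderiv, fun t ht => ⟨hnonneg _, ?_⟩⟩
  set g : ℝ → ℝ := fun s => f s * Real.exp s with hg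
  have hgd : ∀ s, HasDerivAt g
      (⟪gradient H (z s), Jmap n (gradient H (z s)) + zstar - z s⟫ * Real.exp s
        + f s * Real.exp s) s := fun s => (hfd s).mul (Real.hasDerivAt_exp s)
  have hanti : AntitoneOn g (Set.Ici 0) := by
    refine antitoneOn_of_deriv_nonpos (convex_Ici 0)
      (fun s _ => (hgd s).continuousAt.continuousWithinAt)
      (fun s _ => (hgd s).differentiableAt.differentiableWithinAt) ?_
    intro s _
    rw [(hgd s).deriv]
    have := key s
    nlinarith [Real.exp_pos s]
  have := hanti (Set.self_mem_Ici) ht ht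
  have h0 : g 0 = f 0 := by simp [g]
  have hexp : Real.exp t > 0 := Real.exp_pos t
  have : f t * Real.exp t ≤ f 0 := by rw [← h0]; exact this
  have hE : Real.exp (-t) = (Real.exp t)⁻¹ := Real.exp_neg t
  rw [hE]
  show f t ≤ f 0 * (Real.exp t)⁻¹
  calc f t = f t * Real.exp t * (Real.exp t)⁻¹ := by field_simp
    _ ≤ f 0 * (Real.exp t)⁻¹ := by
        apply mul_le_mul_of_nonneg_right _ (le_of_lt (inv_pos.mpr hexp))
        linarith
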